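/- If W satisfies the minimal constraints, W·ln W is integrable, all powers W^k for k ≥ 1 are integrable, and the purity μ of W is positive, then S[W] ≥ ln(2π/μ). -/

import Mathlib

open Real MeasureTheory

/-- If `W` satisfies the minimal constraints, `W·ln W` is integrable, all powers `W^k` for
`k ≥ 1` are integrable, and the purity `μ = 2π ∫ W²` is positive, then `S[W] ≥ ln(2π/μ)`. -/
theorem wigner_entropy_ge_log_two_pi_div_purity (W : ℝ × ℝ → ℝ) (hmeas : Measurable W)
    (hpos : ∀ z, 0 ≤ W z)
    (hnorm : ∫ z, W z = 1)
    (hbound : ∀ z, Real.pi * W z ≤ 1)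
    (hlog : Integrable (fun z => W z * Real.log (W z)))
    (hpow : ∀ k : ℕ, 1 ≤ k → Integrable (fun z => (W z) ^ k))
    (hmu : 0 < 2 * Real.pi * ∫ z, (W z) ^ 2) :
    (-∫ z, W z * Real.log (W z))
      ≥ Real.log (2 * Real.pi / (2 * Real.pi * ∫ z, (W z) ^ 2)) := by
  set c := ∫ z, (W z) ^ 2 with hc
  have hπ : (0:ℝ) < 2 * Real.pi := by positivity
  have hcpos : 0 < c := by nlinarith [hmu]
  have hpt : ∀ z, W z * Real.log (W z) ≤ W z * Real.log c + ((W z)^2 / c - W z) := by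
    intro z
    rcases eq_or_lt_of_le (hpos z) with h0 | h0
    · simp [← h0]
    · have h1 : Real.log (W z / c) ≤ W z / c - 1 :=
        Real.log_le_sub_one_of_pos (by positivity)
      rw [Real.log_div (ne_of_gt h0) (ne_of_gt hcpos)] at h1
      have h2 : Real.log (W z) ≤ Real.log c + (W z / c - 1) := by linarith
      have h3 := mul_le_mul_of_nonneg_left h2 (le_of_lt h0)
      calc W z * Real.log (W z) ≤ W z * (Real.log c + (W z / c - 1)) := h3
        _ = W z * Real.log c + ((W z)^2 / c - W z) := by field_simp
  have h1 : Integrable W := by simpa using hpow 1 le_rfl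
  have h2 : Integrable (fun z => (W z)^2) := hpow 2 (by norm_num)
  have hintA : Integrable (fun z => W z * Real.log c) := h1.mul_const _
  have hintB : Integrable (fun z => (W z)^2 / c - W z) := (h2.div_const _).sub h1
  have hI : ∫ z, W z * Real.log (W z) ≤ ∫ z, (W z * Real.log c + ((W z)^2 / c - W z)) :=
    integral_mono hlog (hintA.add hintB) hpt
  rw [integral_add hintA hintB, integral_sub (h2.div_const _) h1,
    integral_mul_const, integral_div, hnorm, ← hc] at hI
  have hIc : ∫ z, W z * Real.log (W z) ≤ Real.log c := by
    have : c / c = 1 := div_self (ne_of_gt hcpos)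
    linarith [hI, this]
  have hlogeq : Real.log (2 * Real.pi / (2 * Real.pi * c)) = -Real.log c := by
    rw [Real.log_div (ne_of_gt hπ) (by positivity),
      Real.log_mul (ne_of_gt hπ) (ne_of_gt hcpos)]
    ring
  rw [hlogeq]
  linarith
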